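/- The numeral system a given by aₙ = λx₁…λxₙ.I has no Zero Test: there is no closed λ-term Z such that (Z a₀) ≃β T and (Z a_{n+1}) ≃β F for all n ∈ ℕ. -/
import Mathlib


/-- Untyped λ-terms in de Bruijn notation. -/
inductive Lam : Type
  | var : ℕ → Lam
  | app : Lam → Lam → Lam
  | lam : Lam → Lam
  deriving DecidableEq

namespace Lam

/-- Shift by one the free variables with index ≥ `d`. -/
def lift (d : ℕ) : Lam → Lam
  | var n => if n < d then var n else var (n + 1)
  | app M N => app (lift d M) (lift d N)
  | lam M => lam (lift (d + 1) M)

/-- Capture-avoiding substitution of `N` for the free variable of index `n`. -/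
def subst : Lam → ℕ → Lam → Lam
  | var m, n, N => if m = n then N else if n < m then var (m - 1) else var m
  | app M₁ M₂, n, N => app (subst M₁ n N) (subst M₂ n N)
  | lam M, n, N => lam (subst M (n + 1) (lift 0 N))

/-- One-step β-reduction (contraction of a β-redex anywhere in the term). -/
inductive Step : Lam → Lam → Prop
  | beta (M N : Lam) : Step (app (lam M) N) (subst M 0 N)
  | appL {M M' : Lam} (N : Lam) : Step M M' → Step (app M N) (app M' N)
  | appR (M : Lam) {N N' : Lam} : Step N N' → Step (app M N) (app M N')
  | lam {M M' : Lam} : Step M M' → Step (Lam.lam M) (Lam.lam M')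

/-- β-equivalence: the equivalence relation generated by one-step β-reduction. -/
def BetaEq : Lam → Lam → Prop := Relation.EqvGen Step

/-- The variable of index `n` occurs free in the term. -/
def HasFree : Lam → ℕ → Prop
  | var m, n => m = n
  | app M N, n => HasFree M n ∨ HasFree N n
  | lam M, n => HasFree M (n + 1)

/-- A term is closed if it has no free variables. -/
def Closed (M : Lam) : Prop := ∀ n, ¬ HasFree M n

/-- A term is β-normal: it contains no β-redex. -/
def IsBetaNormal : Lam → Prop
  | app (lam _) _ => False
  | app M N => IsBetaNormal M ∧ IsBetaNormal N
  | lam M => IsBetaNormal M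
  | var _ => True

/-- A term is βη-normal: it contains no β-redex and no η-redex
`λx.(M x)` with `x` not free in `M`. -/
def IsBetaEtaNormal : Lam → Prop
  | app (lam _) _ => False
  | app M N => IsBetaEtaNormal M ∧ IsBetaEtaNormal N
  | lam (app M (var 0)) => HasFree M 0 ∧ IsBetaEtaNormal (app M (var 0))
  | lam M => IsBetaEtaNormal M
  | var _ => True

/-- `I = λx.x`. -/
def I : Lam := lam (var 0)

/-- `T = λxλy.x`. -/
def T : Lam := lam (lam (var 1))

/-- `F = λxλy.y`. -/
def F : Lam := lam (lam (var 0))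

/-- The pair `<M,N> = λx.(x M N)` (the binder shifts the free variables of `M,N`). -/
def pair (M N : Lam) : Lam := lam (app (app (var 0) (lift 0 M)) (lift 0 N))

end Lam

/-- The numeral system `a` : `aₙ = λx₁…λxₙ.I` (so `a₀ = I`). -/
def Lam.sysA : ℕ → Lam
  | 0 => Lam.I
  | n + 1 => Lam.lam (Lam.sysA n)

namespace Lam

/-! ### de Bruijn lifting/substitution lemmas -/

theorem lift_lift (t : Lam) {i j : ℕ} (h : i ≤ j) :
    lift i (lift j t) = lift (j + 1) (lift i t) := by
  induction t generalizing i j with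
  | var n =>
      simp only [lift]
      split_ifs <;> simp only [lift] <;> split_ifs <;>
        first | rfl | (exact congrArg Lam.var (by omega)) | (exfalso; omega)
  | app M N ihM ihN => simp only [lift, ihM h, ihN h]
  | lam M ih => simp only [lift, ih (by omega : i + 1 ≤ j + 1)]

theorem lift_subst (t s : Lam) {i j : ℕ} (h : j ≤ i) :
    lift i (subst t j s) = subst (lift (i + 1) t) j (lift i s) := by
  induction t generalizing i j s with
  | var n =>
      simp only [lift, subst]
      split_ifs <;> simp only [lift, subst] <;> split_ifs <;>
        first | rfl | (exact congrArg Lam.var (by omega)) | (exfalso; omega)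
  | app M N ihM ihN => simp only [lift, subst, ihM _ h, ihN _ h]
  | lam M ih =>
      simp only [lift, subst, ih _ (by omega : j + 1 ≤ i + 1)]
      rw [lift_lift s (Nat.zero_le i)]

theorem lift_subst_lt (t s : Lam) {i j : ℕ} (h : i ≤ j) :
    lift i (subst t j s) = subst (lift i t) (j + 1) (lift i s) := by
  induction t generalizing i j s with
  | var n =>
      simp only [lift, subst]
      split_ifs <;> simp only [lift, subst] <;> split_ifs <;>
        first | rfl | (exact congrArg Lam.var (by omega)) | (exfalso; omega)
  | app M N ihM ihN => simp only [lift, subst, ihM _ h, ihN _ h]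
  | lam M ih =>
      simp only [lift, subst, ih _ (by omega : i + 1 ≤ j + 1)]
      rw [lift_lift s (Nat.zero_le i)]

theorem subst_lift (t : Lam) {i : ℕ} (s : Lam) : subst (lift i t) i s = t := by
  induction t generalizing i s with
  | var n =>
      simp only [lift, subst]
      split_ifs <;> simp only [lift, subst] <;> split_ifs <;>
        first | rfl | (exact congrArg Lam.var (by omega)) | (exfalso; omega)
  | app M N ihM ihN => simp only [lift, subst, ihM, ihN]
  | lam M ih => simp only [lift, subst, ih]

theorem subst_subst (t u v : Lam) {i j : ℕ} (h : i ≤ j) :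
    subst (subst t i u) j v = subst (subst t (j + 1) (lift i v)) i (subst u j v) := by
  induction t generalizing u v i j with
  | var n =>
      simp only [subst]
      split_ifs <;>
        first
          | (exfalso; omega)
          | rfl
          | (exact (subst_lift v (subst u j v)).symm)
          | (exact (subst_lift v (subst u j v)))
          | (simp only [subst]; split_ifs <;>
              first
                | rfl
                | (exact congrArg Lam.var (by omega))
                | (exfalso; omega)
                | (exact (subst_lift v (subst u j v)).symm)
                | (exact (subst_lift v (subst u j v))))
  | app M N ihM ihN => simp only [subst, ihM _ _ h, ihN _ _ h]
  | lam M ih =>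
      simp only [subst, ih _ _ (by omega : i + 1 ≤ j + 1)]
      rw [lift_lift v (Nat.zero_le i), ← lift_subst_lt u v (Nat.zero_le j)]

end Lam
namespace Lam

/-! ### Closed terms -/

theorem lift_of_closed' {M : Lam} {d : ℕ} (h : ∀ k, d ≤ k → ¬ HasFree M k) :
    lift d M = M := by
  induction M generalizing d with
  | var n =>
      have : n < d := by
        by_contra hn
        exact h n (by omega) rfl
      simp [lift, this]
  | app M N ihM ihN =>
      simp only [lift]
      rw [ihM fun k hk hf => h k hk (Or.inl hf), ihN fun k hk hf => h k hk (Or.inr hf)]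
  | lam M ih =>
      simp only [lift]
      rw [ih fun k hk hf => ?_]
      rcases Nat.exists_eq_add_of_le hk with ⟨m, rfl⟩
      exact h (d + m) (by omega) (by
        have : d + 1 + m = (d + m) + 1 := by omega
        rw [this] at hf
        exact hf)

theorem subst_of_closed' {M : Lam} {d : ℕ} (h : ∀ k, d ≤ k → ¬ HasFree M k) (N : Lam) :
    subst M d N = M := by
  induction M generalizing d N with
  | var n =>
      have : n < d := by
        by_contra hn
        exact h n (by omega) rfl
      simp only [subst]
      rw [if_neg (by omega), if_neg (by omega)]
  | app M N ihM ihN =>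
      simp only [subst]
      rw [ihM fun k hk hf => h k hk (Or.inl hf), ihN fun k hk hf => h k hk (Or.inr hf)]
  | lam M ih =>
      simp only [subst]
      rw [ih fun k hk hf => ?_]
      rcases Nat.exists_eq_add_of_le hk with ⟨m, rfl⟩
      exact h (d + m) (by omega) (by
        have : d + 1 + m = (d + m) + 1 := by omega
        rw [this] at hf
        exact hf)

theorem lift_of_closed {M : Lam} (h : Closed M) (d : ℕ) : lift d M = M :=
  lift_of_closed' fun k _ => h k

theorem subst_of_closed {M : Lam} (h : Closed M) (d : ℕ) (N : Lam) : subst M d N = M :=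
  subst_of_closed' (fun k _ => h k) N

theorem sysA_closed (n : ℕ) : Closed (sysA n) := by
  induction n with
  | zero =>
      intro k hk
      simp only [sysA, I, HasFree] at hk
      omega
  | succ n ih =>
      intro k hk
      exact ih (k + 1) hk

theorem lift_sysA (d n : ℕ) : lift d (sysA n) = sysA n := lift_of_closed (sysA_closed n) d

theorem subst_sysA (d n : ℕ) (N : Lam) : subst (sysA n) d N = sysA n :=
  subst_of_closed (sysA_closed n) d N

/-! ### Multi-step reduction -/

/-- Multi-step β-reduction. -/
def Steps : Lam → Lam → Prop := Relation.ReflTransGen Step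

theorem Steps.refl {M : Lam} : Steps M M := Relation.ReflTransGen.refl

theorem Steps.single {M N : Lam} (h : Step M N) : Steps M N := Relation.ReflTransGen.single h

theorem Steps.trans {M N P : Lam} (h : Steps M N) (h' : Steps N P) : Steps M P :=
  Relation.ReflTransGen.trans h h'

theorem Steps.app_left {M M' N : Lam} (h : Steps M M') : Steps (app M N) (app M' N) := by
  induction h with
  | refl => exact Steps.refl
  | tail _ h2 ih => exact ih.trans (Steps.single (Step.appL _ h2))

theorem Steps.app_right {N N' : Lam} (M : Lam) (h : Steps N N') : Steps (app M N) (app M N') := by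
  induction h with
  | refl => exact Steps.refl
  | tail _ h2 ih => exact ih.trans (Steps.single (Step.appR _ h2))

theorem Steps.app_congr {M M' N N' : Lam} (h : Steps M M') (h' : Steps N N') :
    Steps (app M N) (app M' N') :=
  (Steps.app_left h).trans (Steps.app_right _ h')

theorem Steps.lam_congr {M M' : Lam} (h : Steps M M') : Steps (lam M) (lam M') := by
  induction h with
  | refl => exact Steps.refl
  | tail _ h2 ih => exact ih.trans (Steps.single (Step.lam h2))

/-! ### Parallel reduction and confluence -/

/-- Parallel reduction. -/
inductive Par : Lam → Lam → Prop
  | var (n : ℕ) : Par (var n) (var n)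
  | lam {M M' : Lam} : Par M M' → Par (Lam.lam M) (Lam.lam M')
  | app {M M' N N' : Lam} : Par M M' → Par N N' → Par (app M N) (app M' N')
  | beta {M M' N N' : Lam} : Par M M' → Par N N' → Par (app (Lam.lam M) N) (subst M' 0 N')

theorem Par.refl (M : Lam) : Par M M := by
  induction M with
  | var n => exact Par.var n
  | app M N ihM ihN => exact Par.app ihM ihN
  | lam M ih => exact Par.lam ih

theorem Par.of_step {M N : Lam} (h : Step M N) : Par M N := by
  induction h with
  | beta M N => exact Par.beta (Par.refl M) (Par.refl N)
  | appL N _ ih => exact Par.app ih (Par.refl N)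
  | appR M _ ih => exact Par.app (Par.refl M) ih
  | lam _ ih => exact Par.lam ih

theorem Par.steps {M N : Lam} (h : Par M N) : Steps M N := by
  induction h with
  | var n => exact Steps.refl
  | lam _ ih => exact ih.lam_congr
  | app _ _ ihM ihN => exact ihM.app_congr ihN
  | beta _ _ ihM ihN =>
      exact (Steps.app_congr ihM.lam_congr ihN).trans (Steps.single (Step.beta _ _))

theorem Par.lift {M N : Lam} (h : Par M N) (d : ℕ) : Par (lift d M) (lift d N) := by
  induction h generalizing d with
  | var n => simp only [Lam.lift]; split_ifs <;> exact Par.refl _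
  | lam _ ih => exact Par.lam (ih (d + 1))
  | app _ _ ihM ihN => exact Par.app (ihM d) (ihN d)
  | beta _ _ ihM ihN =>
      simp only [Lam.lift]
      rw [lift_subst _ _ (Nat.zero_le d)]
      exact Par.beta (ihM (d + 1)) (ihN d)

theorem Par.subst {M M' N N' : Lam} (h : Par M M') (h' : Par N N') (k : ℕ) :
    Par (subst M k N) (subst M' k N') := by
  induction h generalizing N N' k with
  | var n =>
      simp only [Lam.subst]
      split_ifs <;> first | exact h' | exact Par.refl _
  | lam _ ih => exact Par.lam (ih (h'.lift 0) (k + 1))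
  | app _ _ ihM ihN => exact Par.app (ihM h' k) (ihN h' k)
  | beta _ _ ihM ihN =>
      simp only [Lam.subst]
      rw [subst_subst _ _ _ (Nat.zero_le k)]
      exact Par.beta (ihM (h'.lift 0) (k + 1)) (ihN h' k)

/-- Takahashi's complete development. -/
def cd : Lam → Lam
  | var n => var n
  | lam M => lam (cd M)
  | app (lam M) N => subst (cd M) 0 (cd N)
  | app (var n) N => app (var n) (cd N)
  | app (app M₁ M₂) N => app (cd (app M₁ M₂)) (cd N)

theorem par_lam_inv {M X : Lam} (h : Par (Lam.lam M) X) : ∃ M', X = Lam.lam M' ∧ Par M M' := by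
  cases h with
  | lam h => exact ⟨_, rfl, h⟩

theorem par_lam_lam_inv {M N : Lam} (h : Par (Lam.lam M) (Lam.lam N)) : Par M N := by
  cases h with
  | lam h => exact h

theorem Par.cd {M N : Lam} (h : Par M N) : Par N (cd M) := by
  induction h with
  | var n => exact Par.var n
  | lam _ ih => exact Par.lam ih
  | @app M M' N N' hM hN ihM ihN =>
      cases M with
      | var n =>
          cases hM; exact Par.app (Par.var n) ihN
      | lam P =>
          rcases par_lam_inv hM with ⟨P', rfl, hP⟩
          have ihM' : Par (Lam.lam P') (Lam.lam (Lam.cd P)) := ihM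
          have hP' : Par P' (Lam.cd P) := par_lam_lam_inv ihM'
          exact Par.beta hP' ihN
      | app M₁ M₂ =>
          exact Par.app ihM ihN
  | beta _ _ ihM ihN =>
      exact Par.subst ihM ihN 0

theorem par_diamond {M N₁ N₂ : Lam} (h1 : Par M N₁) (h2 : Par M N₂) :
    ∃ P, Par N₁ P ∧ Par N₂ P := ⟨cd M, h1.cd, h2.cd⟩

end Lam
namespace Lam

theorem par_cr : ∀ a b c : Lam, Par a b → Par a c →
    ∃ d, Relation.ReflGen Par b d ∧ Relation.ReflTransGen Par c d := by
  intro a b c h1 h2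
  exact ⟨cd a, Relation.ReflGen.single h1.cd, Relation.ReflTransGen.single h2.cd⟩

theorem join_equiv : Equivalence (Relation.Join (Relation.ReflTransGen Par)) :=
  Relation.equivalence_join_reflTransGen par_cr

theorem rtgPar_steps {M N : Lam} (h : Relation.ReflTransGen Par M N) : Steps M N := by
  induction h with
  | refl => exact Steps.refl
  | tail _ h2 ih => exact ih.trans h2.steps

theorem betaEq_join {M N : Lam} (h : BetaEq M N) : ∃ P, Steps M P ∧ Steps N P := by
  have key : Relation.Join (Relation.ReflTransGen Par) M N := by
    induction h with
    | rel a b hab => exact ⟨b, Relation.ReflTransGen.single (Par.of_step hab),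
        Relation.ReflTransGen.refl⟩
    | refl a => exact join_equiv.refl a
    | symm a b _ ih => exact join_equiv.symm ih
    | trans a b c _ _ ih1 ih2 => exact join_equiv.trans ih1 ih2
  rcases key with ⟨P, h1, h2⟩
  exact ⟨P, rtgPar_steps h1, rtgPar_steps h2⟩

theorem steps_betaEq {M N : Lam} (h : Steps M N) : BetaEq M N := by
  induction h with
  | refl => exact Relation.EqvGen.refl M
  | tail _ h2 ih => exact Relation.EqvGen.trans _ _ _ ih (Relation.EqvGen.rel _ _ h2)

/-! ### Normal forms we need -/

theorem sysA_no_step : ∀ (n : ℕ) {X : Lam}, ¬ Step (sysA n) X := by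
  intro n
  induction n with
  | zero =>
      intro X h
      cases h with
      | lam h => cases h
  | succ n ih =>
      intro X h
      cases h with
      | lam h => exact ih h

theorem steps_sysA_eq {n : ℕ} {X : Lam} (h : Steps (sysA n) X) : X = sysA n := by
  induction h with
  | refl => rfl
  | tail h1 h2 ih => exact absurd (ih ▸ h2) (sysA_no_step n)

theorem T_no_step : ∀ {X : Lam}, ¬ Step T X := by
  intro X h
  cases h with
  | lam h => cases h with
    | lam h => cases h

theorem steps_T_eq {X : Lam} (h : Steps T X) : X = T := by
  induction h with
  | refl => rfl
  | tail h1 h2 ih => exact absurd (ih ▸ h2) T_no_step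

theorem F_eq_sysA : F = sysA 1 := rfl

theorem T_ne_sysA1 : T ≠ sysA 1 := by decide

theorem sysA_injective : Function.Injective sysA := by
  intro m n h
  induction m generalizing n with
  | zero =>
      cases n with
      | zero => rfl
      | succ n =>
          exfalso
          simp only [sysA, I] at h
          cases n <;> simp_all [sysA, I]
  | succ m ih =>
      cases n with
      | zero =>
          exfalso
          simp only [sysA, I] at h
          cases m <;> simp_all [sysA, I]
      | succ n => simp only [sysA] at h; rw [ih (by injection h)]

/-- From β-equivalence to a normal form, every β-equivalent normal term is equal. -/
theorem betaEq_sysA_sysA {m n : ℕ} (h : BetaEq (sysA m) (sysA n)) : m = n := by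
  rcases betaEq_join h with ⟨P, h1, h2⟩
  exact sysA_injective ((steps_sysA_eq h1).symm.trans (steps_sysA_eq h2))

end Lam
namespace Lam

/-! ### Kashima-style standardization -/

/-- Weak head step. -/
inductive Hap1 : Lam → Lam → Prop
  | beta (M N : Lam) : Hap1 (app (Lam.lam M) N) (subst M 0 N)
  | app {M M' : Lam} (N : Lam) : Hap1 M M' → Hap1 (app M N) (app M' N)

/-- Weak head reduction. -/
def Hap : Lam → Lam → Prop := Relation.ReflTransGen Hap1

theorem Hap.refl {M : Lam} : Hap M M := Relation.ReflTransGen.refl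

theorem Hap.trans {M N P : Lam} (h : Hap M N) (h' : Hap N P) : Hap M P :=
  Relation.ReflTransGen.trans h h'

theorem Hap1.step {M N : Lam} (h : Hap1 M N) : Step M N := by
  induction h with
  | beta M N => exact Step.beta M N
  | app N _ ih => exact Step.appL N ih

theorem Hap.steps {M N : Lam} (h : Hap M N) : Steps M N := by
  induction h with
  | refl => exact Steps.refl
  | tail _ h2 ih => exact ih.trans (Steps.single h2.step)

theorem Hap.app_left {M M' : Lam} (N : Lam) (h : Hap M M') : Hap (app M N) (app M' N) := by
  induction h with
  | refl => exact Hap.refl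
  | tail _ h2 ih => exact ih.trans (Relation.ReflTransGen.single (Hap1.app N h2))

/-- Kashima's standard reduction relation. -/
inductive St : Lam → Lam → Prop
  | var {M : Lam} (n : ℕ) : Hap M (var n) → St M (var n)
  | lam {M P P' : Lam} : Hap M (Lam.lam P) → St P P' → St M (Lam.lam P')
  | app {M P P' Q Q' : Lam} : Hap M (app P Q) → St P P' → St Q Q' → St M (app P' Q')

theorem St.hap_prepend {M M' N : Lam} (h : Hap M M') (h' : St M' N) : St M N := by
  cases h' with
  | var n h2 => exact St.var n (h.trans h2)
  | lam h2 h3 => exact St.lam (h.trans h2) h3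
  | app h2 h3 h4 => exact St.app (h.trans h2) h3 h4

theorem St.refl (M : Lam) : St M M := by
  induction M with
  | var n => exact St.var n Hap.refl
  | app M N ihM ihN => exact St.app Hap.refl ihM ihN
  | lam M ih => exact St.lam Hap.refl ih

theorem Hap1.lift {M N : Lam} (h : Hap1 M N) (d : ℕ) : Hap1 (Lam.lift d M) (Lam.lift d N) := by
  induction h generalizing d with
  | beta M N =>
      have h1 : Lam.lift d (Lam.subst M 0 N) = Lam.subst (Lam.lift (d + 1) M) 0 (Lam.lift d N) :=
        lift_subst M N (Nat.zero_le d)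
      rw [show Lam.lift d (Lam.app (Lam.lam M) N)
            = Lam.app (Lam.lam (Lam.lift (d + 1) M)) (Lam.lift d N) from rfl, h1]
      exact Hap1.beta _ _
  | app N _ ih => exact Hap1.app _ (ih d)

theorem Hap.lift {M N : Lam} (h : Hap M N) (d : ℕ) : Hap (Lam.lift d M) (Lam.lift d N) := by
  induction h with
  | refl => exact Hap.refl
  | tail _ h2 ih => exact ih.trans (Relation.ReflTransGen.single (h2.lift d))

theorem St.lift {M N : Lam} (h : St M N) (d : ℕ) : St (Lam.lift d M) (Lam.lift d N) := by
  induction h generalizing d with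
  | var n h2 =>
      have := h2.lift d
      simp only [Lam.lift] at this ⊢
      split_ifs at this ⊢ <;> exact St.var _ this
  | lam h2 _ ih => exact St.lam (h2.lift d) (ih (d + 1))
  | app h2 _ _ ihP ihQ => exact St.app (h2.lift d) (ihP d) (ihQ d)

theorem Hap1.subst {M N : Lam} (h : Hap1 M N) (k : ℕ) (C : Lam) :
    Hap1 (Lam.subst M k C) (Lam.subst N k C) := by
  induction h generalizing k C with
  | beta M N =>
      have h1 : Lam.subst (Lam.subst M 0 N) k C
          = Lam.subst (Lam.subst M (k + 1) (Lam.lift 0 C)) 0 (Lam.subst N k C) :=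
        subst_subst M N C (Nat.zero_le k)
      rw [show Lam.subst (Lam.app (Lam.lam M) N) k C
            = Lam.app (Lam.lam (Lam.subst M (k + 1) (Lam.lift 0 C))) (Lam.subst N k C) from rfl, h1]
      exact Hap1.beta _ _
  | app N _ ih => exact Hap1.app _ (ih k C)

theorem Hap.subst {M N : Lam} (h : Hap M N) (k : ℕ) (C : Lam) :
    Hap (Lam.subst M k C) (Lam.subst N k C) := by
  induction h with
  | refl => exact Hap.refl
  | tail _ h2 ih => exact ih.trans (Relation.ReflTransGen.single (h2.subst k C))

theorem St.subst {A B C D : Lam} (h : St A B) (h' : St C D) (k : ℕ) :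
    St (Lam.subst A k C) (Lam.subst B k D) := by
  induction h generalizing C D k with
  | @var M n h2 =>
      have hh : Hap (Lam.subst M k C) (Lam.subst (Lam.var n) k C) := h2.subst k C
      by_cases hn : n = k
      · subst hn
        simp only [Lam.subst, if_pos rfl] at hh ⊢
        exact St.hap_prepend hh h'
      · refine St.hap_prepend hh ?_
        simp only [Lam.subst, if_neg hn]
        split_ifs <;> exact St.refl _
  | lam h2 _ ih =>
      exact St.lam (show Hap _ _ from by
          have := h2.subst k C
          exact this)
        (ih (h'.lift 0) (k + 1))
  | app h2 _ _ ihP ihQ =>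
      exact St.app (h2.subst k C) (ihP h' k) (ihQ h' k)

theorem St.step {M N N' : Lam} (h : St M N) (h' : Step N N') : St M N' := by
  induction h' generalizing M with
  | beta P Q =>
      cases h with
      | app h2 h3 h4 =>
          cases h3 with
          | lam h5 h6 =>
              refine St.hap_prepend h2 ?_
              refine St.hap_prepend (Hap.app_left _ h5) ?_
              refine St.hap_prepend (Relation.ReflTransGen.single (Hap1.beta _ _)) ?_
              exact St.subst h6 h4 0
  | appL N h1 ih =>
      cases h with
      | app h2 h3 h4 => exact St.app h2 (ih h3) h4
  | appR M h1 ih =>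
      cases h with
      | app h2 h3 h4 => exact St.app h2 h3 (ih h4)
  | lam h1 ih =>
      cases h with
      | lam h2 h3 => exact St.lam h2 (ih h3)

theorem steps_st {M N : Lam} (h : Steps M N) : St M N := by
  induction h with
  | refl => exact St.refl M
  | tail _ h2 ih => exact ih.step h2

end Lam
namespace Lam

/-! ### Simulation: tracking the numeral argument through a standard reduction -/

theorem sysA_succ_eat (k : ℕ) (Q : Lam) : Step (app (sysA (k + 1)) Q) (sysA k) := by
  have h := Step.beta (sysA k) Q
  rw [subst_sysA] at h
  exact h

theorem hap1_reflect {W Y : Lam} {d : ℕ} (h : Hap1 (subst W d (sysA 0)) Y) :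
    (∃ W', Y = subst W' d (sysA 0) ∧
        ∀ C, Closed C → Hap1 (subst W d C) (subst W' d C)) ∨
    (∃ t s, ∀ k, Steps (subst W d (sysA (t + k))) (sysA (s + k))) := by
  induction W generalizing Y with
  | var m =>
      exfalso
      by_cases hm : m = d
      · simp only [subst, if_pos hm, sysA, I] at h
        cases h
      · simp only [subst, if_neg hm] at h
        split_ifs at h <;> cases h
  | lam W₁ =>
      exfalso
      simp only [subst] at h
      cases h
  | app W₁ W₂ ihW₁ _ =>
      simp only [subst] at h
      cases W₁ with
      | var m =>
          by_cases hm : m = d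
          · -- the argument is in head position: the "event"
            refine Or.inr ⟨1, 0, fun k => ?_⟩
            have h1 : subst (app (var m) W₂) d (sysA (1 + k))
                = app (sysA (1 + k)) (subst W₂ d (sysA (1 + k))) := by
              simp only [subst, if_pos hm]
            rw [h1, show 1 + k = k + 1 from by omega, show (0 : ℕ) + k = k from by omega]
            exact Steps.single (sysA_succ_eat k _)
          · exfalso
            simp only [subst, if_neg hm] at h
            split_ifs at h
            · cases h with
              | app _ h1 => cases h1
            · cases h with
              | app _ h1 => cases h1
      | lam W₁' =>
          cases h with
          | beta P Q =>
              refine Or.inl ⟨subst W₁' 0 W₂, ?_, fun C hC => ?_⟩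
              · rw [subst_subst W₁' W₂ (sysA 0) (Nat.zero_le d)]
              · have h1 : subst (app (lam W₁') W₂) d C
                    = app (Lam.lam (subst W₁' (d + 1) C)) (subst W₂ d C) := by
                  simp only [subst, lift_of_closed hC]
                rw [h1, subst_subst W₁' W₂ C (Nat.zero_le d), lift_of_closed hC]
                exact Hap1.beta _ _
          | app N hstep =>
              rename_i Y₁
              exfalso
              simp only [subst] at hstep
              cases hstep
      | app V₁ V₂ =>
          cases h with
          | app N hstep =>
              rcases ihW₁ hstep with ⟨W', hW', hu⟩ | ⟨t, s, he⟩
              · refine Or.inl ⟨app W' W₂, ?_, fun C hC => ?_⟩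
                · simp only [subst, hW']
                · exact Hap1.app _ (hu C hC)
              · refine Or.inr ⟨t + 1, s, fun k => ?_⟩
                have h1 : subst (app (app V₁ V₂) W₂) d (sysA (t + 1 + k))
                    = app (subst (app V₁ V₂) d (sysA (t + 1 + k)))
                        (subst W₂ d (sysA (t + 1 + k))) := rfl
                rw [h1]
                have h2 := he (k + 1)
                rw [show t + (k + 1) = t + 1 + k from by omega] at h2
                rw [show s + (k + 1) = (s + k) + 1 from by omega] at h2
                exact (Steps.app_left h2).trans (Steps.single (sysA_succ_eat (s + k) _))

end Lam
namespace Lam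

theorem hap_reflect {X : Lam} {d : ℕ} :
    ∀ {M : Lam}, Hap M X → ∀ W : Lam, M = subst W d (sysA 0) →
    (∃ W', X = subst W' d (sysA 0) ∧
        ∀ C, Closed C → Steps (subst W d C) (subst W' d C)) ∨
    (∃ t s, ∀ k, Steps (subst W d (sysA (t + k))) (sysA (s + k))) := by
  intro M h
  induction h using Relation.ReflTransGen.head_induction_on with
  | refl =>
      intro W hW
      exact Or.inl ⟨W, hW, fun C _ => Steps.refl⟩
  | head h1 h2 ih =>
      intro W hW
      subst hW
      rcases hap1_reflect h1 with ⟨W₁, hY, hu⟩ | hev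
      · rcases ih W₁ hY with ⟨W', hX, hu'⟩ | ⟨t, s, he⟩
        · exact Or.inl ⟨W', hX, fun C hC =>
            (Steps.single ((hu C hC).step)).trans (hu' C hC)⟩
        · exact Or.inr ⟨t, s, fun k =>
            (Steps.single ((hu _ (sysA_closed (t + k))).step)).trans (he k)⟩
      · exact Or.inr hev

/-- Terms with no application. -/
def AppFree : Lam → Prop
  | var _ => True
  | app _ _ => False
  | lam M => AppFree M

theorem sim {M V : Lam} (h : St M V) :
    AppFree V → ∀ (W : Lam) (d : ℕ), M = subst W d (sysA 0) →
      (∀ n, Steps (subst W d (sysA n)) V) ∨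
      (∃ t s, ∀ k, Steps (subst W d (sysA (t + k))) (sysA (s + k))) := by
  induction h with
  | var n hap =>
      intro _ W d hW
      subst hW
      rcases hap_reflect hap W rfl with ⟨W', hX, hu⟩ | hev
      · left
        intro n'
        cases W' with
        | var j =>
            by_cases hj : j = d
            · exfalso
              rw [hj] at hX
              simp only [subst, if_pos rfl, sysA, I] at hX
              cases hX
            · have hval : subst (var j) d (sysA n') = var n := by
                have h0 : subst (var j) d (sysA 0) = var n := hX.symm
                simp only [subst, if_neg hj] at h0 ⊢
                exact h0
              have := hu (sysA n') (sysA_closed n')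
              rw [hval] at this
              exact this
        | app _ _ => exfalso; simp only [subst] at hX; cases hX
        | lam _ => exfalso; simp only [subst] at hX; cases hX
      · exact Or.inr hev
  | @lam M₀ P P' hap hP ih =>
      intro hV W d hW
      subst hW
      rcases hap_reflect hap W rfl with ⟨W', hX, hu⟩ | hev
      · cases W' with
        | var j =>
            by_cases hj : j = d
            · refine Or.inr ⟨0, 0, fun k => ?_⟩
              have hh := hu (sysA (0 + k)) (sysA_closed (0 + k))
              rw [hj] at hh
              simp only [subst, if_pos rfl] at hh
              exact hh
            · exfalso
              simp only [subst, if_neg hj] at hX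
              split_ifs at hX <;> cases hX
        | app _ _ => exfalso; simp only [subst] at hX; cases hX
        | lam W₁ =>
            have hbody : ∀ C : Lam, Closed C →
                subst (Lam.lam W₁) d C = Lam.lam (subst W₁ (d + 1) C) := by
              intro C hC
              simp only [subst, lift_of_closed hC]
            have hPeq : P = subst W₁ (d + 1) (sysA 0) := by
              rw [hbody (sysA 0) (sysA_closed 0)] at hX
              injection hX
            rcases ih hV W₁ (d + 1) hPeq with hL | ⟨t, s, he⟩
            · left
              intro n'
              have hh := hu (sysA n') (sysA_closed n')
              rw [hbody (sysA n') (sysA_closed n')] at hh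
              exact hh.trans (Steps.lam_congr (hL n'))
            · refine Or.inr ⟨t, s + 1, fun k => ?_⟩
              have hh := hu (sysA (t + k)) (sysA_closed (t + k))
              rw [hbody (sysA (t + k)) (sysA_closed (t + k))] at hh
              refine hh.trans ?_
              have := Steps.lam_congr (he k)
              rw [show s + 1 + k = (s + k) + 1 from by omega]
              exact this
      · exact Or.inr hev
  | app hap _ _ _ _ =>
      intro hV
      exact absurd hV (fun x => x)

end Lam
/-- The numeral system `a` (`aₙ = λx₁…λxₙ.I`) has no Zero Test : there is no closed
λ-term `Z` with `(Z a₀) ≃β T` and `(Z a_{n+1}) ≃β F` for all `n`. -/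
theorem statement2 :
    ¬ ∃ Z, Lam.Closed Z ∧ Lam.BetaEq (Lam.app Z (Lam.sysA 0)) Lam.T ∧
        ∀ n, Lam.BetaEq (Lam.app Z (Lam.sysA (n + 1))) Lam.F := by
  rintro ⟨Z, hZ, h0, hn⟩
  -- `Z a₀` reduces to the normal form `T`
  have hT : Lam.Steps (Lam.app Z (Lam.sysA 0)) Lam.T := by
    rcases Lam.betaEq_join h0 with ⟨P, h1, h2⟩
    rw [Lam.steps_T_eq h2] at h1
    exact h1
  have hst : Lam.St (Lam.app Z (Lam.sysA 0)) Lam.T := Lam.steps_st hT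
  -- rewrite `Z aₙ` as a substitution instance of `Z ⋆`
  have hkey : ∀ n : ℕ, Lam.subst (Lam.app Z (Lam.var 0)) 0 (Lam.sysA n) = Lam.app Z (Lam.sysA n) := by
    intro n
    simp [Lam.subst, Lam.subst_of_closed hZ]
  have hAF : Lam.AppFree Lam.T := trivial
  rcases Lam.sim hst hAF (Lam.app Z (Lam.var 0)) 0 (hkey 0).symm with hL | ⟨t, s, he⟩
  · -- `Z a₁ ↠ T` as well, contradicting `Z a₁ ≃β F`
    have h1 : Lam.Steps (Lam.app Z (Lam.sysA 1)) Lam.T := by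
      have := hL 1
      rwa [hkey 1] at this
    have hTF : Lam.BetaEq Lam.T Lam.F :=
      Relation.EqvGen.trans _ _ _
        (Relation.EqvGen.symm _ _ (Lam.steps_betaEq h1)) (hn 0)
    rcases Lam.betaEq_join hTF with ⟨P, hP1, hP2⟩
    have e1 : P = Lam.T := Lam.steps_T_eq hP1
    have e2 : P = Lam.sysA 1 := Lam.steps_sysA_eq (n := 1) hP2
    exact Lam.T_ne_sysA1 (e1 ▸ e2)
  · -- the argument gets consumed: `Z a_{t+2} ↠ a_{s+2}`, contradicting `Z a_{t+2} ≃β F`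
    have h2 : Lam.Steps (Lam.app Z (Lam.sysA (t + 2))) (Lam.sysA (s + 2)) := by
      have := he 2
      rwa [hkey (t + 2)] at this
    have hEq : Lam.BetaEq (Lam.sysA (s + 2)) (Lam.sysA 1) := by
      have hb := hn (t + 1)
      rw [show t + 1 + 1 = t + 2 from by omega] at hb
      exact Relation.EqvGen.trans _ _ _
        (Relation.EqvGen.symm _ _ (Lam.steps_betaEq h2)) hb
    have := Lam.betaEq_sysA_sysA hEq
    omega
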